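/- arXiv:2402.07568 — 5 statements merged into one kernel-verified Lean document; each statement's English description precedes it below -/
import Mathlib

section
/- Let S ⊆ ℝ^d and let r, r', λ > 0 with m := ⌊r²/λ²⌋. Suppose S contains m vectors b₁, …, b_m, where each b_i decomposes as b_i = (b_i^{(1)}, b_i^{(2)}) ∈ ℝ^{d₁} × ℝ^{d₂} (with d₁ + d₂ = d), the vectors b₁^{(2)}, …, b_m^{(2)} are pairwise orthogonal, ‖b_i‖ = r' and ‖b_i^{(2)}‖ = r for all i. Then the set {b₁, …, b_m} is shattered by the partial concept class H_{r',λ}(S); in particular VC-dim(H_{r',λ}(S)) ≥ ⌊r²/λ²⌋. -/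
/-!
Fix a labelling `σ` of the `bᵢ` and let `g = ∑ ±bᵢ⁽²⁾`, with the sign of `σ i`. By
orthogonality `⟪g, bⱼ⁽²⁾⟫ = ±r²`, so the projections to the second block of the two convex hulls
lie in the hyperplanes `⟪g, ·⟫ = r²` and `⟪g, ·⟫ = -r²`, while `‖g‖ = √m r`. Cauchy–Schwarz
then separates the hulls by `2r/√m ≥ 2λ`, and projecting does not increase distances. Hence the
concept labelling `bᵢ` by `σ` and undefined elsewhere lies in `H_{r',λ}(S)`.
-/

open scoped Classical

noncomputable section

/-- A labeled sample `(x i, y i)` in a real normed space is `(r, λ)`-separable if all points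
lie in a ball of radius `r` and the Euclidean distance between the convex hulls of the two
classes is at least `2·λ`. -/
def RLSep {E : Type} [NormedAddCommGroup E] [NormedSpace ℝ E] (r lam : ℝ)
    {ι : Type} (x : ι → E) (y : ι → Bool) : Prop :=
  (∃ p : E, ∀ i, dist (x i) p ≤ r) ∧
  ∀ u ∈ convexHull ℝ (x '' {i | y i = true}),
    ∀ v ∈ convexHull ℝ (x '' {i | y i = false}), 2 * lam ≤ dist u v

/-- The partial concept class `H_{r,λ}(S)`: partial concepts (`none` = undefined = `⋆`)
supported on `S` all of whose finite labeled samples from the support are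
`(r, λ)`-separable. -/
def HClass {E : Type} [NormedAddCommGroup E] [NormedSpace ℝ E] (r lam : ℝ) (S : Set E) :
    Set (E → Option Bool) :=
  {h | (∀ x : E, h x ≠ none → x ∈ S) ∧
    ∀ (m : ℕ) (x : Fin m → E) (y : Fin m → Bool),
      (∀ i, h (x i) = some (y i)) → RLSep r lam x y}

/-- A finite set `U` is shattered by a partial concept class `H` if every `{0,1}`-pattern on
`U` is realized by some concept in `H`. -/
def ShattersP {X : Type} (H : Set (X → Option Bool)) (U : Finset X) : Prop :=
  ∀ τ : X → Bool, ∃ h ∈ H, ∀ x ∈ U, h x = some (τ x)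

open scoped InnerProductSpace

theorem RLSep.comp {E : Type} [NormedAddCommGroup E] [NormedSpace ℝ E] {r lam : ℝ}
    {ι κ : Type} {x : ι → E} {y : ι → Bool} (h : RLSep r lam x y) (j : κ → ι) :
    RLSep r lam (x ∘ j) (y ∘ j) := by
  obtain ⟨⟨p, hp⟩, hsep⟩ := h
  have hsub : ∀ c, (x ∘ j) '' {k | (y ∘ j) k = c} ⊆ x '' {i | y i = c} := by
    rintro c _ ⟨k, hk, rfl⟩
    exact ⟨j k, hk, rfl⟩
  exact ⟨⟨p, fun k => hp (j k)⟩, fun u hu v hv =>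
    hsep u (convexHull_mono (hsub true) hu) v (convexHull_mono (hsub false) hv)⟩

theorem shattersP_hClass_image {E : Type} [NormedAddCommGroup E] [NormedSpace ℝ E]
    [DecidableEq E] {ι : Type} [Fintype ι] {r lam : ℝ} {S : Set E} {b : ι → E}
    (hbS : ∀ i, b i ∈ S)
    (hsep : ∀ σ : ι → Bool, RLSep r lam b σ) :
    ShattersP (HClass r lam S) (Finset.univ.image b) := by
  intro τ
  refine ⟨fun x => if x ∈ Set.range b then some (τ x) else none, ⟨?_, ?_⟩, ?_⟩
  · intro x hx
    obtain ⟨i, rfl⟩ : x ∈ Set.range b := by by_contra h; simp [h] at hx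
    exact hbS i
  · intro n x y hxy
    have hlabel : ∀ k, ∃ i, b i = x k ∧ τ (b i) = y k := by
      intro k
      have := hxy k
      dsimp only at this
      split_ifs at this with hk
      · obtain ⟨i, hi⟩ := hk
        exact ⟨i, hi, by simpa [hi] using this⟩
    choose j hj hτ using hlabel
    have hx : x = b ∘ j := funext fun k => (hj k).symm
    have hy : y = (τ ∘ b) ∘ j := funext fun k => (hτ k).symm
    rw [hx, hy]
    exact (hsep (τ ∘ b)).comp j
  · simp

theorem inner_sum_smul_of_pairwise_inner_eq_zero {F : Type*} [NormedAddCommGroup F]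
    [InnerProductSpace ℝ F] {ι : Type*} [Fintype ι] {w : ι → F}
    (horth : Pairwise fun i j => ⟪w i, w j⟫_ℝ = 0) (c : ι → ℝ) (j : ι) :
    ⟪∑ i, c i • w i, w j⟫_ℝ = c j * ‖w j‖ ^ 2 := by
  rw [sum_inner, Finset.sum_eq_single j]
  · rw [real_inner_smul_left, real_inner_self_eq_norm_sq]
  · intro i _ hij
    rw [real_inner_smul_left, horth hij, mul_zero]
  · simp

theorem four_mul_sq_le_card_mul_dist_sq_of_mem_convexHull {F : Type*} [NormedAddCommGroup F]
    [InnerProductSpace ℝ F] {ι : Type*} [Fintype ι] {w : ι → F} {r : ℝ}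
    (horth : Pairwise fun i j => ⟪w i, w j⟫_ℝ = 0) (hnorm : ∀ i, ‖w i‖ = r) (σ : ι → Bool)
    {u v : F} (hu : u ∈ convexHull ℝ (w '' {i | σ i = true}))
    (hv : v ∈ convexHull ℝ (w '' {i | σ i = false})) :
    4 * r ^ 2 ≤ Fintype.card ι * dist u v ^ 2 := by
  set sign : Bool → ℝ := fun c => if c then 1 else -1
  set g := ∑ i, sign (σ i) • w i
  have hg_w : ∀ j, ⟪g, w j⟫_ℝ = sign (σ j) * r ^ 2 := fun j => by
    rw [inner_sum_smul_of_pairwise_inner_eq_zero horth, hnorm]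
  have hg_hull : ∀ c, convexHull ℝ (w '' {i | σ i = c}) ⊆ {x | ⟪g, x⟫_ℝ = sign c * r ^ 2} := by
    intro c
    refine convexHull_min ?_ (convex_hyperplane (innerₛₗ ℝ g).isLinear _)
    rintro _ ⟨i, rfl, rfl⟩
    exact hg_w i
  have hgu : ⟪g, u⟫_ℝ = r ^ 2 := by simpa [sign] using hg_hull true hu
  have hgv : ⟪g, v⟫_ℝ = -r ^ 2 := by simpa [sign] using hg_hull false hv
  have hg_norm : ‖g‖ ^ 2 = Fintype.card ι * r ^ 2 := by
    have hsign : ∀ c, sign c * (sign c * r ^ 2) = r ^ 2 := by intro c; cases c <;> simp [sign]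
    calc ‖g‖ ^ 2 = ⟪g, ∑ i, sign (σ i) • w i⟫_ℝ := (real_inner_self_eq_norm_sq g).symm
      _ = ∑ i, sign (σ i) * (sign (σ i) * r ^ 2) := by
        simp only [inner_sum, real_inner_smul_right, hg_w]
      _ = Fintype.card ι * r ^ 2 := by simp [hsign]
  have key : r ^ 2 * (4 * r ^ 2) ≤ r ^ 2 * (Fintype.card ι * dist u v ^ 2) := by
    calc r ^ 2 * (4 * r ^ 2) = ⟪g, u - v⟫_ℝ ^ 2 := by rw [inner_sub_right, hgu, hgv]; ring
      _ ≤ (‖g‖ * ‖u - v‖) ^ 2 := by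
        rw [← sq_abs]; exact pow_le_pow_left₀ (abs_nonneg _) (abs_real_inner_le_norm _ _) 2
      _ = r ^ 2 * (Fintype.card ι * dist u v ^ 2) := by rw [mul_pow, hg_norm, dist_eq_norm]; ring
  rcases eq_or_ne r 0 with rfl | hr
  · rw [zero_pow two_ne_zero, mul_zero]
    positivity
  · exact le_of_mul_le_mul_left key (by positivity)

def EuclideanSpace.projInr (𝕜 : Type*) [RCLike 𝕜] (ι κ : Type*) [Fintype ι] [Fintype κ] :
    EuclideanSpace 𝕜 (ι ⊕ κ) →L[𝕜] EuclideanSpace 𝕜 κ :=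
  (ContinuousLinearMap.snd 𝕜 _ _).comp EuclideanSpace.sumEquivProd.toContinuousLinearMap

@[simp]
theorem EuclideanSpace.projInr_apply {𝕜 : Type*} [RCLike 𝕜] {ι κ : Type*} [Fintype ι]
    [Fintype κ] (x : EuclideanSpace 𝕜 (ι ⊕ κ)) (k : κ) :
    EuclideanSpace.projInr 𝕜 ι κ x k = x (Sum.inr k) :=
  rfl

theorem EuclideanSpace.norm_projInr_le {𝕜 : Type*} [RCLike 𝕜] {ι κ : Type*} [Fintype ι]
    [Fintype κ] (x : EuclideanSpace 𝕜 (ι ⊕ κ)) : ‖EuclideanSpace.projInr 𝕜 ι κ x‖ ≤ ‖x‖ := by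
  refine le_of_sq_le_sq ?_ (norm_nonneg x)
  rw [EuclideanSpace.norm_sq_eq, EuclideanSpace.norm_sq_eq, Fintype.sum_sum_type]
  simp only [EuclideanSpace.projInr_apply]
  exact le_add_of_nonneg_left (by positivity)

theorem rlSep_of_pairwise_inner_map_eq_zero {E F : Type} [NormedAddCommGroup E]
    [NormedSpace ℝ E] [NormedAddCommGroup F] [InnerProductSpace ℝ F] {ι : Type} [Fintype ι]
    (P : E →ₗ[ℝ] F) (hP : ∀ x, ‖P x‖ ≤ ‖x‖) {b : ι → E} {r r' lam : ℝ} (hr : 0 < r)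
    (horth : Pairwise fun i j => ⟪P (b i), P (b j)⟫_ℝ = 0) (hnormP : ∀ i, ‖P (b i)‖ = r)
    (hnorm : ∀ i, ‖b i‖ ≤ r') (hcard : Fintype.card ι * lam ^ 2 ≤ r ^ 2) (σ : ι → Bool) :
    RLSep r' lam b σ := by
  refine ⟨⟨0, fun i => by rw [dist_zero_right]; exact hnorm i⟩, fun u hu v hv => ?_⟩
  have hmap : ∀ c, P '' convexHull ℝ (b '' {i | σ i = c}) =
      convexHull ℝ ((P ∘ b) '' {i | σ i = c}) := fun c => by
    rw [Set.image_comp]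
    exact P.image_convexHull _
  have hPuv := four_mul_sq_le_card_mul_dist_sq_of_mem_convexHull horth hnormP σ
    (hmap true ▸ Set.mem_image_of_mem P hu) (hmap false ▸ Set.mem_image_of_mem P hv)
  have hdist : dist (P u) (P v) ≤ dist u v := by
    simpa only [dist_eq_norm, ← map_sub] using hP (u - v)
  have hcard_pos : (0 : ℝ) < Fintype.card ι := by
    by_contra! h
    nlinarith [sq_nonneg (dist (P u) (P v))]
  refine le_of_sq_le_sq ?_ dist_nonneg
  have hsq : Fintype.card ι * (2 * lam) ^ 2 ≤ Fintype.card ι * dist u v ^ 2 := by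
    calc Fintype.card ι * (2 * lam) ^ 2 ≤ 4 * r ^ 2 := by nlinarith
      _ ≤ Fintype.card ι * dist (P u) (P v) ^ 2 := hPuv
      _ ≤ Fintype.card ι * dist u v ^ 2 := by gcongr
  exact le_of_mul_le_mul_left hsq hcard_pos

theorem vc_lower_bound_of_orthogonal_general (d₁ d₂ : ℕ) (r r' lam : ℝ)
    (hr : 0 < r) (hlam : 0 < lam)
    (S : Set (EuclideanSpace ℝ (Fin d₁ ⊕ Fin d₂))) (m : ℕ) (hm : m = ⌊r ^ 2 / lam ^ 2⌋₊)
    (b : Fin m → EuclideanSpace ℝ (Fin d₁ ⊕ Fin d₂))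
    (hbS : ∀ i, b i ∈ S)
    (horth : ∀ i j, i ≠ j → ∑ k, b i (Sum.inr k) * b j (Sum.inr k) = 0)
    (hnorm : ∀ i, ‖b i‖ = r')
    (hnorm2 : ∀ i, Real.sqrt (∑ k, (b i (Sum.inr k)) ^ 2) = r) :
    ShattersP (HClass r' lam S) (Finset.univ.image b) ∧
      (Finset.univ.image b).card = m := by
  let P := EuclideanSpace.projInr ℝ (Fin d₁) (Fin d₂)
  have hPorth : Pairwise fun i j => ⟪P (b i), P (b j)⟫_ℝ = 0 := fun i j hij => by
    simpa [P, PiLp.inner_apply, mul_comm] using horth i j hij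
  have hPnorm : ∀ i, ‖P (b i)‖ = r := fun i => by
    simpa [P, EuclideanSpace.norm_eq] using hnorm2 i
  have hcard : (Fintype.card (Fin m) : ℝ) * lam ^ 2 ≤ r ^ 2 := by
    rw [Fintype.card_fin, ← le_div_iff₀ (by positivity), hm]
    exact Nat.floor_le (by positivity)
  have hinj : Function.Injective b :=
    (linearIndependent_of_ne_zero_of_inner_eq_zero
      (fun i => norm_ne_zero_iff.mp (by rw [hPnorm]; exact hr.ne')) hPorth).injective.of_comp
  have hsep : ∀ σ : Fin m → Bool, RLSep r' lam b σ := fun σ =>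
    rlSep_of_pairwise_inner_map_eq_zero P.toLinearMap EuclideanSpace.norm_projInr_le hr hPorth
      hPnorm (fun i => (hnorm i).le) hcard σ
  refine ⟨shattersP_hClass_image hbS hsep, ?_⟩
  rw [Finset.card_image_of_injective _ hinj, Finset.card_univ, Fintype.card_fin]

/-- If `S ⊆ ℝ^{d₁} × ℝ^{d₂} = ℝ^d` contains `m := ⌊r²/λ²⌋` vectors
`b₁, …, b_m` whose second components are pairwise orthogonal, with `‖b_i‖ = r'` and
`‖b_i^{(2)}‖ = r`, then `{b₁, …, b_m}` is shattered by the partial concept class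
`H_{r',λ}(S)`; in particular `VC-dim(H_{r',λ}(S)) ≥ ⌊r²/λ²⌋`. -/
theorem vc_lower_bound_of_orthogonal (d₁ d₂ : ℕ) (r r' lam : ℝ)
    (hr : 0 < r) (hr' : 0 < r') (hlam : 0 < lam)
    (S : Set (EuclideanSpace ℝ (Fin d₁ ⊕ Fin d₂))) (m : ℕ) (hm : m = ⌊r ^ 2 / lam ^ 2⌋₊)
    (b : Fin m → EuclideanSpace ℝ (Fin d₁ ⊕ Fin d₂))
    (hbS : ∀ i, b i ∈ S)
    (horth : ∀ i j, i ≠ j → ∑ k, b i (Sum.inr k) * b j (Sum.inr k) = 0)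
    (hnorm : ∀ i, ‖b i‖ = r')
    (hnorm2 : ∀ i, Real.sqrt (∑ k, (b i (Sum.inr k)) ^ 2) = r) :
    ShattersP (HClass r' lam S) (Finset.univ.image b) ∧
      (Finset.univ.image b).card = m :=
  vc_lower_bound_of_orthogonal_general d₁ d₂ r r' lam hr hlam S m hm b hbS horth hnorm hnorm2

end
end

section
/- For every n ≥ 6, there exists a pair of non-isomorphic n-order graphs (G_n, H_n) and a graph F such that, with 𝓕 := {F}, for every number of rounds T ≥ 0: ‖φ̄^{(T)}_WL(G_n) − φ̄^{(T)}_WL(H_n)‖ = 0 (the normalized 1-WL feature vectors coincide) while ‖φ̄^{(T)}_{WL,𝓕}(G_n) − φ̄^{(T)}_{WL,𝓕}(H_n)‖ = √2 (the normalized 1-WL_𝓕 feature vectors are orthonormal). -/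
open scoped Classical

noncomputable section

/-- The type of 1-WL colors after `t` rounds, with initial colors in `A`.  A color at round
`t+1` is the pair of the color at round `t` together with the multiset of the neighbors'
colors at round `t`; this encodes the colorings of the Weisfeiler--Leman algorithm up to the
injective renaming `RELABEL`. -/
def WLColor (A : Type) : ℕ → Type :=
  fun t => Nat.rec A (fun _ C => C × Multiset C) t

/-- The 1-WL coloring after `t` rounds of a finite graph `G` with initial labeling `lab`:
`C_0 := lab` and `C_{t+1}(v) := (C_t(v), {{C_t(u) : u ∈ N(v)}})`. -/
def wlColoring {V A : Type} [Fintype V] (G : SimpleGraph V) (lab : V → A) :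
    (t : ℕ) → V → WLColor A t :=
  fun t => Nat.rec (motive := fun t => V → WLColor A t) lab
    (fun _ ih v => (ih v, ((Finset.univ.filter fun u => G.Adj v u).val.map ih))) t

/-- The number of vertices of `G` having 1-WL color `c` at round `t`
(an entry of the WL feature vector `φ_t(G)`). -/
def wlCount {V A : Type} [Fintype V] (G : SimpleGraph V) (lab : V → A) (t : ℕ)
    (c : WLColor A t) : ℕ :=
  (Finset.univ.filter fun v => wlColoring G lab t v = c).card

/-- The set `Σ_t` of colors appearing in `G` at round `t`. -/
def wlColors {V A : Type} [Fintype V] (G : SimpleGraph V) (lab : V → A) (t : ℕ) :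
    Finset (WLColor A t) :=
  Finset.univ.image (wlColoring G lab t)

/-- The constant labeling of an unlabeled graph. -/
def unlab {V : Type} : V → ℕ := fun _ => 0

/-- A bundled finite graph. -/
structure FinGraph where
  n : ℕ
  adj : SimpleGraph (Fin n)

/-- `v` is contained in a vertex subset `X` of `G` such that the induced subgraph `G[X]`
is isomorphic to `F`. -/
def inSubCopy {V : Type} (G : SimpleGraph V) (F : FinGraph) (v : V) : Prop :=
  ∃ X : Finset V, v ∈ X ∧ Nonempty (G.induce (X : Set V) ≃g F.adj)

/-- The initial labeling `ℓ_𝓕` of the `1`-WL_𝓕 algorithm: two vertices get the same label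
iff they agree, for every `F ∈ 𝓕`, on containment in a vertex subset inducing a subgraph
isomorphic to `F`. -/
def ellF {V : Type} (G : SimpleGraph V) (FF : Finset FinGraph) : V → Set FinGraph :=
  fun v => {F | F ∈ FF ∧ inSubCopy G F v}

/-- The Euclidean norm of the WL feature vector `φ^{(T)}(G)`. -/
def wlNorm {V A : Type} [Fintype V] (G : SimpleGraph V) (lab : V → A) (T : ℕ) : ℝ :=
  Real.sqrt (∑ t ∈ Finset.range (T + 1), ∑ c ∈ wlColors G lab t,
    ((wlCount G lab t c : ℝ)) ^ 2)

/-- The Euclidean distance between the normalized WL feature vectors `φ̄^{(T)}` of two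
graphs (the sum ranges over all colors occurring in either graph; all other coordinates of
the feature vectors vanish). -/
def wlDistN {V W A : Type} [Fintype V] [Fintype W] (G : SimpleGraph V) (labG : V → A)
    (H : SimpleGraph W) (labH : W → A) (T : ℕ) : ℝ :=
  Real.sqrt (∑ t ∈ Finset.range (T + 1), ∑ c ∈ wlColors G labG t ∪ wlColors H labH t,
    ((wlCount G labG t c : ℝ) / wlNorm G labG T -
      (wlCount H labH t c : ℝ) / wlNorm H labH T) ^ 2)


def cycOn (a b x y : ℕ) : Prop :=
  a ≤ x ∧ x < b ∧ a ≤ y ∧ y < b ∧ x ≠ y ∧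
    (x + 1 = y ∨ y + 1 = x ∨ (x + 1 = b ∧ y = a) ∨ (y + 1 = b ∧ x = a))

def GA (n : ℕ) : SimpleGraph (Fin n) where
  Adj v w := cycOn 0 n v.val w.val
  symm := ⟨by intro v w h; unfold cycOn at *; omega⟩
  loopless := ⟨by intro v h; unfold cycOn at h; omega⟩

def HA (n : ℕ) : SimpleGraph (Fin n) where
  Adj v w := cycOn 0 3 v.val w.val ∨ cycOn 3 n v.val w.val
  symm := ⟨by intro v w h; unfold cycOn at *; omega⟩
  loopless := ⟨by intro v h; unfold cycOn at h; omega⟩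

lemma cyc_filter_card (n a b : ℕ) (hb : b ≤ n) (hab : a + 3 ≤ b)
    (G : SimpleGraph (Fin n)) (v : Fin n) (hv1 : a ≤ v.val) (hv2 : v.val < b)
    (hadj : ∀ w : Fin n, G.Adj v w ↔ cycOn a b v.val w.val) :
    (Finset.univ.filter fun u => G.Adj v u).card = 2 := by
  have hu1 : (if v.val + 1 = b then a else v.val + 1) < n := by split <;> omega
  have hu2 : (if v.val = a then b - 1 else v.val - 1) < n := by split <;> omega
  have : (Finset.univ.filter fun u => G.Adj v u) =
      {(⟨_, hu1⟩ : Fin n), (⟨_, hu2⟩ : Fin n)} := by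
    ext w
    simp only [Finset.mem_filter, Finset.mem_univ, true_and, Finset.mem_insert,
      Finset.mem_singleton, hadj, cycOn, Fin.ext_iff]
    split_ifs <;> omega
  rw [this, Finset.card_pair (Fin.ne_of_val_ne (show (if v.val + 1 = b then a else v.val + 1)
    ≠ (if v.val = a then b - 1 else v.val - 1) by split_ifs <;> omega))]

lemma GA_deg (n : ℕ) (hn : 6 ≤ n) (v : Fin n) :
    (Finset.univ.filter fun u => (GA n).Adj v u).card = 2 := by
  refine cyc_filter_card n 0 n le_rfl (by omega) _ v (by omega) v.isLt (fun w => Iff.rfl)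

lemma HA_deg (n : ℕ) (hn : 6 ≤ n) (v : Fin n) :
    (Finset.univ.filter fun u => (HA n).Adj v u).card = 2 := by
  by_cases h : v.val < 3
  · refine cyc_filter_card n 0 3 (by omega) (by omega) _ v (by omega) h (fun w => ?_)
    show cycOn 0 3 _ _ ∨ cycOn 3 n _ _ ↔ _
    unfold cycOn; omega
  · refine cyc_filter_card n 3 n le_rfl (by omega) _ v (by omega) v.isLt (fun w => ?_)
    show cycOn 0 3 _ _ ∨ cycOn 3 n _ _ ↔ _
    unfold cycOn; omega

lemma GA_triangle_free (n : ℕ) (hn : 6 ≤ n) (x y z : Fin n)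
    (hxy : (GA n).Adj x y) (hyz : (GA n).Adj y z) (hxz : (GA n).Adj x z) : False := by
  unfold GA cycOn at hxy hyz hxz
  simp only [SimpleGraph.mk'] at hxy hyz hxz  -- may not be needed
  omega

lemma HA_triangle (n : ℕ) (hn : 6 ≤ n) :
    (HA n).Adj ⟨0, by omega⟩ ⟨1, by omega⟩ ∧ (HA n).Adj ⟨1, by omega⟩ ⟨2, by omega⟩ ∧
      (HA n).Adj ⟨0, by omega⟩ ⟨2, by omega⟩ := by
  exact ⟨Or.inl (show cycOn 0 3 0 1 by unfold cycOn; omega),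
    Or.inl (show cycOn 0 3 1 2 by unfold cycOn; omega),
    Or.inl (show cycOn 0 3 0 2 by unfold cycOn; omega)⟩

lemma no_iso (n : ℕ) (hn : 6 ≤ n) : IsEmpty ((GA n) ≃g (HA n)) := by
  constructor
  intro f
  obtain ⟨h01, h12, h02⟩ := HA_triangle n hn
  exact GA_triangle_free n hn _ _ _ (f.symm.map_adj_iff.mpr h01)
    (f.symm.map_adj_iff.mpr h12) (f.symm.map_adj_iff.mpr h02)

/-! Auxiliary lemmas about constant WL colorings. -/

def constColor (A : Type) (a : A) (d : ℕ) : (t : ℕ) → WLColor A t :=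
  fun t => Nat.rec (motive := fun t => WLColor A t) a
    (fun _ c => (c, Multiset.replicate d c)) t

lemma constColor_ne {A : Type} {a b : A} (hab : a ≠ b) (d : ℕ) :
    ∀ t, constColor A a d t ≠ constColor A b d t := by
  intro t
  induction t with
  | zero => exact hab
  | succ t ih => exact fun h => ih (congrArg Prod.fst h)

lemma wlColoring_const {V A : Type} [Fintype V] (G : SimpleGraph V) (lab : V → A) (a : A)
    (hlab : ∀ v, lab v = a) (d : ℕ)
    (hd : ∀ v : V, (Finset.univ.filter fun u => G.Adj v u).card = d) :
    ∀ t v, wlColoring G lab t v = constColor A a d t := by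
  intro t
  induction t with
  | zero => exact hlab
  | succ t ih =>
    intro v
    show (wlColoring G lab t v,
        (Finset.univ.filter fun u => G.Adj v u).val.map (wlColoring G lab t)) =
      (constColor A a d t, Multiset.replicate d (constColor A a d t))
    rw [ih v, Multiset.map_congr rfl (fun x _ => ih x), Multiset.map_const', ← hd v]
    rfl

lemma wlColors_const {V A : Type} [Fintype V] [Nonempty V] (G : SimpleGraph V) (lab : V → A)
    (a : A) (hlab : ∀ v, lab v = a) (d : ℕ)
    (hd : ∀ v : V, (Finset.univ.filter fun u => G.Adj v u).card = d) (t : ℕ) :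
    wlColors G lab t = {constColor A a d t} := by
  unfold wlColors
  have h : wlColoring G lab t = fun _ => constColor A a d t :=
    funext (wlColoring_const G lab a hlab d hd t)
  rw [h, Finset.image_const Finset.univ_nonempty]

lemma wlCount_const_self {V A : Type} [Fintype V] (G : SimpleGraph V) (lab : V → A)
    (a : A) (hlab : ∀ v, lab v = a) (d : ℕ)
    (hd : ∀ v : V, (Finset.univ.filter fun u => G.Adj v u).card = d) (t : ℕ) :
    wlCount G lab t (constColor A a d t) = Fintype.card V := by
  unfold wlCount
  rw [Finset.filter_true_of_mem (fun v _ => wlColoring_const G lab a hlab d hd t v),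
    Finset.card_univ]

lemma wlCount_const_ne {V A : Type} [Fintype V] (G : SimpleGraph V) (lab : V → A)
    (a : A) (hlab : ∀ v, lab v = a) (d : ℕ)
    (hd : ∀ v : V, (Finset.univ.filter fun u => G.Adj v u).card = d) (t : ℕ)
    (c : WLColor A t) (hc : c ≠ constColor A a d t) :
    wlCount G lab t c = 0 := by
  unfold wlCount
  rw [Finset.filter_false_of_mem, Finset.card_empty]
  intro v _ h
  exact hc (h ▸ wlColoring_const G lab a hlab d hd t v)

lemma wlNorm_const {V A : Type} [Fintype V] [Nonempty V] (G : SimpleGraph V) (lab : V → A)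
    (a : A) (hlab : ∀ v, lab v = a) (d : ℕ)
    (hd : ∀ v : V, (Finset.univ.filter fun u => G.Adj v u).card = d) (T : ℕ) :
    wlNorm G lab T = Real.sqrt ((T + 1) * (Fintype.card V : ℝ) ^ 2) := by
  unfold wlNorm
  congr 1
  have h1 : ∀ t ∈ Finset.range (T + 1),
      (∑ c ∈ wlColors G lab t, ((wlCount G lab t c : ℝ)) ^ 2) = ((Fintype.card V : ℝ)) ^ 2 := by
    intro t _
    rw [wlColors_const G lab a hlab d hd t, Finset.sum_singleton,
      wlCount_const_self G lab a hlab d hd t]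
  rw [Finset.sum_congr rfl h1, Finset.sum_const, Finset.card_range, nsmul_eq_mul]
  push_cast
  ring

/-! `ℓ_𝓕` labels for our graphs, with `F` the `n`-cycle itself. -/

lemma ellF_GA (n : ℕ) (hn : 6 ≤ n) (v : Fin n) :
    ellF (GA n) {(⟨n, GA n⟩ : FinGraph)} v = ({(⟨n, GA n⟩ : FinGraph)} : Set FinGraph) := by
  ext F'
  simp only [ellF, Set.mem_setOf_eq, Finset.mem_singleton, Set.mem_singleton_iff]
  constructor
  · exact fun h => h.1
  · rintro rfl
    refine ⟨rfl, Finset.univ, Finset.mem_univ v, ?_⟩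
    rw [Finset.coe_univ]
    exact ⟨SimpleGraph.induceUnivIso (GA n)⟩

lemma ellF_HA (n : ℕ) (hn : 6 ≤ n) (v : Fin n) :
    ellF (HA n) {(⟨n, GA n⟩ : FinGraph)} v = (∅ : Set FinGraph) := by
  ext F'
  simp only [ellF, Set.mem_setOf_eq, Finset.mem_singleton, Set.mem_empty_iff_false,
    iff_false, not_and]
  rintro rfl ⟨X, -, ⟨e⟩⟩
  have hcard : X.card = n := by
    have h := Fintype.card_congr e.toEquiv
    simpa using h
  have hX : X = Finset.univ := Finset.eq_univ_of_card X (by rw [hcard, Fintype.card_fin])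
  subst hX
  rw [Finset.coe_univ] at e
  exact (no_iso n hn).false (((SimpleGraph.induceUnivIso (HA n)).symm.trans e).symm)

/-- For every `n ≥ 6` there are non-isomorphic `n`-order graphs `G`, `H`
and a graph `F` such that, with `𝓕 := {F}`, for every number of rounds `T ≥ 0` the
normalized `1`-WL feature vectors of `G` and `H` coincide while the normalized `1`-WL_𝓕
feature vectors are at distance `√2` (i.e. orthonormal). -/
theorem wlF_separates_with_max_margin (n : ℕ) (hn : 6 ≤ n) :
    ∃ (G H : SimpleGraph (Fin n)) (F : FinGraph),
      IsEmpty (G ≃g H) ∧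
      ∀ T : ℕ,
        wlDistN G unlab H unlab T = 0 ∧
        wlDistN G (ellF G {F}) H (ellF H {F}) T = Real.sqrt 2 := by
  haveI : Nonempty (Fin n) := ⟨⟨0, by omega⟩⟩
  have hdG := GA_deg n hn
  have hdH := HA_deg n hn

  refine ⟨GA n, HA n, ⟨n, GA n⟩, no_iso n hn, fun T => ⟨?_, ?_⟩⟩
  · -- unlabeled distance is 0
    unfold wlDistN
    rw [Finset.sum_eq_zero, Real.sqrt_zero]
    intro t _
    apply Finset.sum_eq_zero
    intro c hc
    rw [wlColors_const (GA n) unlab 0 (fun _ => rfl) 2 hdG t,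
      wlColors_const (HA n) unlab 0 (fun _ => rfl) 2 hdH t, Finset.union_self,
      Finset.mem_singleton] at hc
    subst hc
    rw [wlCount_const_self (GA n) unlab 0 (fun _ => rfl) 2 hdG t,
      wlCount_const_self (HA n) unlab 0 (fun _ => rfl) 2 hdH t,
      wlNorm_const (GA n) unlab 0 (fun _ => rfl) 2 hdG T,
      wlNorm_const (HA n) unlab 0 (fun _ => rfl) 2 hdH T, sub_self]
    norm_num
  · -- labeled distance is √2
    set F : FinGraph := ⟨n, GA n⟩ with hF
    have hlabG : ∀ v, ellF (GA n) {F} v = ({F} : Set FinGraph) := ellF_GA n hn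
    have hlabH : ∀ v, ellF (HA n) {F} v = (∅ : Set FinGraph) := ellF_HA n hn
    have hne : ({F} : Set FinGraph) ≠ (∅ : Set FinGraph) := by
      simp
    have hcne := constColor_ne hne 2
    set N : ℝ := Real.sqrt ((T + 1) * (n : ℝ) ^ 2) with hNdef
    have hNpos : 0 < N := Real.sqrt_pos.mpr (by positivity)
    have hN2 : N ^ 2 = (T + 1) * (n : ℝ) ^ 2 := Real.sq_sqrt (by positivity)
    have hnormG : wlNorm (GA n) (ellF (GA n) {F}) T = N := by
      rw [wlNorm_const (GA n) _ ({F} : Set FinGraph) hlabG 2 hdG T, Fintype.card_fin]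
    have hnormH : wlNorm (HA n) (ellF (HA n) {F}) T = N := by
      rw [wlNorm_const (HA n) _ (∅ : Set FinGraph) hlabH 2 hdH T, Fintype.card_fin]
    unfold wlDistN
    rw [hnormG, hnormH]
    have hinner : ∀ t ∈ Finset.range (T + 1),
        (∑ c ∈ wlColors (GA n) (ellF (GA n) {F}) t ∪ wlColors (HA n) (ellF (HA n) {F}) t,
          ((wlCount (GA n) (ellF (GA n) {F}) t c : ℝ) / N -
            (wlCount (HA n) (ellF (HA n) {F}) t c : ℝ) / N) ^ 2) = 2 * ((n : ℝ) / N) ^ 2 := by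
      intro t _
      rw [wlColors_const (GA n) _ ({F} : Set FinGraph) hlabG 2 hdG t,
        wlColors_const (HA n) _ (∅ : Set FinGraph) hlabH 2 hdH t,
        show ({constColor (Set FinGraph) ({F} : Set FinGraph) 2 t} ∪
          {constColor (Set FinGraph) (∅ : Set FinGraph) 2 t}) = {constColor (Set FinGraph) ({F} : Set FinGraph) 2 t,
          constColor (Set FinGraph) (∅ : Set FinGraph) 2 t} from rfl, Finset.sum_pair (hcne t),
        wlCount_const_self (GA n) _ ({F} : Set FinGraph) hlabG 2 hdG t,
        wlCount_const_self (HA n) _ (∅ : Set FinGraph) hlabH 2 hdH t,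
        wlCount_const_ne (HA n) _ (∅ : Set FinGraph) hlabH 2 hdH t _ (hcne t),
        wlCount_const_ne (GA n) _ ({F} : Set FinGraph) hlabG 2 hdG t _ (Ne.symm (hcne t)),
        Fintype.card_fin]
      push_cast
      ring
    rw [Finset.sum_congr rfl hinner, Finset.sum_const, Finset.card_range, nsmul_eq_mul]
    have : ((T : ℝ) + 1) * (2 * ((n : ℝ) / N) ^ 2) = 2 := by
      rw [div_pow, hN2]
      field_simp
    push_cast
    rw [this]

end
end

section
/- For every n ≥ 10, there exists a set S of pairwise non-isomorphic graphs of order at most n, a concept c : S → {0,1}, and a graph F such that: (1) the graphs in S are pairwise distinguishable by 1-WL after one round; (2) for every T ≥ 0, the normalized 1-WL feature vectors {φ̄^{(T)}_WL(G) : G ∈ S} are NOT linearly separable with respect to the concept c; (3) for every T ≥ 0, with 𝓕 := {F}, the normalized 1-WL_𝓕 feature vectors {φ̄^{(T)}_{WL,𝓕}(G) : G ∈ S} ARE linearly separable with respect to c. The same statements hold for the unnormalized feature vectors. -/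
open scoped Classical

noncomputable section

/-- Inner product `⟨w, φ^{(T)}(G)⟩` of a weight vector `w` (one weight for every round and
every color) with the WL feature vector of `G`; the sum may range over the colors occurring
in `G` because all other coordinates of the feature vector vanish. -/
def wlIP {V A : Type} [Fintype V] (w : (t : ℕ) → WLColor A t → ℝ) (G : SimpleGraph V)
    (lab : V → A) (T : ℕ) : ℝ :=
  ∑ t ∈ Finset.range (T + 1), ∑ c ∈ wlColors G lab t, w t c * (wlCount G lab t c : ℝ)

/-- Linear separability of the family `{(G, cl G) : G ∈ S}` with respect to a feature map
whose inner products with hyperplane normal vectors `w` are given by `ip`. -/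
def LinSepBy {X A : Type} (S : Finset X) (cl : X → Bool)
    (ip : ((t : ℕ) → WLColor A t → ℝ) → X → ℝ) : Prop :=
  ∃ (w : (t : ℕ) → WLColor A t → ℝ) (b : ℝ), ∀ G ∈ S,
    (cl G = true → 0 < ip w G + b) ∧ (cl G = false → ip w G + b < 0)

/-!
The graphs `K₃, C₄, C₅, 2K₃` are all 2-regular, so with a constant initial label 1-WL gives
every vertex of each of them the same color in every round, and the feature vector of `G` is
`|V(G)|` times one fixed vector. Their orders differ, which distinguishes them after one round,
but the normalized feature vectors all coincide, and the unnormalized ones lie on a ray with `C₄`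
between `K₃` and `2K₃` (`4 = ⅔·3 + ⅓·6`); so the concept "contains a triangle" is not linearly
separable. Initializing with membership in a triangle (`𝓕 = {K₃}`) labels all vertices of
`K₃, 2K₃` with `{K₃}` and all vertices of `C₄, C₅` with `∅`, and a weight vector supported on the
round-0 colors separates.
-/

open SimpleGraph Finset

namespace SimpleGraph

theorem IsRegularOfDegree.of_locallyFinite {V : Type} {G : SimpleGraph V}
    {i j : G.LocallyFinite} {d : ℕ} (h : @IsRegularOfDegree V G i d) :
    @IsRegularOfDegree V G j d := by
  rwa [Subsingleton.elim j i]

theorem cycleGraph_isRegularOfDegree_two (n : ℕ) : (cycleGraph (n + 3)).IsRegularOfDegree 2 :=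
  fun _ => cycleGraph_degree_three_le

theorem cliqueFree_three_of_forall {V : Type} {G : SimpleGraph V}
    (h : ∀ a b c, G.Adj a b → G.Adj a c → G.Adj b c → False) : G.CliqueFree 3 := by
  intro s hs
  obtain ⟨a, b, c, hab, hac, hbc, -⟩ := is3Clique_iff.1 hs
  exact h a b c hab hac hbc

end SimpleGraph

section RegularGraphs

variable {V A : Type} [Fintype V] {G : SimpleGraph V} {lab : V → A}

def regularColor (a : A) (d : ℕ) : (t : ℕ) → WLColor A t
  | 0 => a
  | t + 1 => (regularColor a d t, Multiset.replicate d (regularColor a d t))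

theorem wlColoring_of_isRegularOfDegree [G.LocallyFinite] {d : ℕ} (hG : G.IsRegularOfDegree d)
    {a : A} (hlab : ∀ v, lab v = a) (t : ℕ) (v : V) :
    wlColoring G lab t v = regularColor a d t := by
  induction t generalizing v with
  | zero => exact hlab v
  | succ t ih =>
    have hdeg : #{u | G.Adj v u} = d := by
      rw [← hG.degree_eq v, ← card_neighborFinset_eq_degree]
      congr 1
      ext
      simp
    change (wlColoring G lab t v, (univ.filter (G.Adj v)).val.map (wlColoring G lab t)) = _
    rw [ih, Multiset.map_congr rfl fun u _ => ih u, Multiset.map_const', card_val, hdeg]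
    rfl

theorem wlIP_eq_sum_univ (w : (t : ℕ) → WLColor A t → ℝ) (T : ℕ) :
    wlIP w G lab T = ∑ t ∈ range (T + 1), ∑ v, w t (wlColoring G lab t v) := by
  refine sum_congr rfl fun t _ => ?_
  rw [sum_comp]
  refine sum_congr rfl fun c _ => ?_
  rw [nsmul_eq_mul, mul_comm]
  rfl

theorem wlNorm_eq_sqrt_sum_univ (T : ℕ) :
    wlNorm G lab T =
      √(∑ t ∈ range (T + 1), ∑ v, (wlCount G lab t (wlColoring G lab t v) : ℝ)) := by
  unfold wlNorm
  congr 1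
  refine sum_congr rfl fun t _ => ?_
  rw [sum_comp (fun c => (wlCount G lab t c : ℝ))]
  refine sum_congr rfl fun c _ => ?_
  rw [nsmul_eq_mul, sq]
  rfl

variable [G.LocallyFinite] {d : ℕ} {a : A}

theorem wlIP_of_isRegularOfDegree (hG : G.IsRegularOfDegree d) (hlab : ∀ v, lab v = a)
    (w : (t : ℕ) → WLColor A t → ℝ) (T : ℕ) :
    wlIP w G lab T = Fintype.card V * ∑ t ∈ range (T + 1), w t (regularColor a d t) := by
  simp [wlIP_eq_sum_univ, wlColoring_of_isRegularOfDegree hG hlab, mul_sum]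

theorem wlNorm_of_isRegularOfDegree (hG : G.IsRegularOfDegree d) (hlab : ∀ v, lab v = a)
    (T : ℕ) : wlNorm G lab T = Fintype.card V * √(T + 1) := by
  have hcount (t : ℕ) : wlCount G lab t (regularColor a d t) = Fintype.card V := by
    simp [wlCount, wlColoring_of_isRegularOfDegree hG hlab]
  rw [wlNorm_eq_sqrt_sum_univ]
  simp only [wlColoring_of_isRegularOfDegree hG hlab, hcount, sum_const, card_univ, card_range,
    nsmul_eq_mul]
  rw [← sq, mul_comm, Real.sqrt_mul (by positivity), Real.sqrt_sq (by positivity)]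
  push_cast
  ring

end RegularGraphs

def roundZeroWeight {A : Type} (f : A → ℝ) : (t : ℕ) → WLColor A t → ℝ
  | 0 => f
  | _ + 1 => fun _ => 0

theorem sum_range_roundZeroWeight {A : Type} (f : A → ℝ) (c : (t : ℕ) → WLColor A t) (T : ℕ) :
    ∑ t ∈ range (T + 1), roundZeroWeight f t (c t) = f (c 0) := by
  simp [sum_range_succ', roundZeroWeight]

theorem not_linSepBy_of_convex_combination {X A : Type} {S : Finset X} {cl : X → Bool}
    {ip : ((t : ℕ) → WLColor A t → ℝ) → X → ℝ} {G G' H : X} (hG : G ∈ S) (hG' : G' ∈ S)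
    (hH : H ∈ S) (hclG : cl G = true) (hclG' : cl G' = true) (hclH : cl H = false) {μ : ℝ}
    (hμ₀ : 0 ≤ μ) (hμ₁ : μ ≤ 1) (hip : ∀ w, ip w H = μ * ip w G + (1 - μ) * ip w G') :
    ¬ LinSepBy S cl ip := by
  rintro ⟨w, b, hsep⟩
  have hposG := (hsep G hG).1 hclG
  have hposG' := (hsep G' hG').1 hclG'
  have hnegH := (hsep H hH).2 hclH
  rw [hip] at hnegH
  nlinarith [mul_nonneg hμ₀ hposG.le, mul_nonneg (sub_nonneg.2 hμ₁) hposG'.le]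

theorem ellF_singleton {V : Type} (G : SimpleGraph V) (F : FinGraph) (v : V) :
    ellF G {F} v = if inSubCopy G F v then {F} else ∅ := by
  ext F'
  split_ifs with h <;> simp only [ellF, mem_singleton, Set.mem_ofPred_eq,
    Set.mem_singleton_iff, Set.mem_empty_iff_false, iff_false, not_and] <;> grind

theorem inSubCopy_top_iff {V : Type} (G : SimpleGraph V) (n : ℕ) (v : V) :
    inSubCopy G ⟨n, ⊤⟩ v ↔ ∃ s : Finset V, v ∈ s ∧ G.IsNClique n s := by
  refine exists_congr fun s => and_congr_right fun _ => ⟨fun ⟨e⟩ => ⟨?_, ?_⟩, fun hs => ?_⟩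
  · rw [← induce_eq_top]
    ext a b
    rw [← e.map_adj_iff]
    exact e.injective.ne_iff
  · simpa using Fintype.card_congr e.toEquiv
  · rw [induce_eq_top.2 hs.isClique]
    exact ⟨Iso.completeGraph (Fintype.equivFinOfCardEq (by simpa using hs.card_eq))⟩

def twoTriangles : SimpleGraph (Fin 6) where
  Adj u v := u ≠ v ∧ u.val / 3 = v.val / 3
  symm := ⟨fun _ _ h => ⟨h.1.symm, h.2.symm⟩⟩
  loopless := ⟨fun _ h => h.1 rfl⟩

instance : DecidableRel twoTriangles.Adj := fun u v =>
  inferInstanceAs (Decidable (u ≠ v ∧ u.val / 3 = v.val / 3))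

theorem twoTriangles_isRegularOfDegree : twoTriangles.IsRegularOfDegree 2 := fun v => by
  rw [← card_neighborFinset_eq_degree, neighborFinset_eq_filter]
  revert v
  decide

theorem cycleGraph_four_cliqueFree : (cycleGraph 4).CliqueFree 3 :=
  cliqueFree_three_of_forall (by decide)

theorem cycleGraph_five_cliqueFree : (cycleGraph 5).CliqueFree 3 :=
  cliqueFree_three_of_forall (by decide)

def K3 : FinGraph := ⟨3, ⊤⟩
def C4 : FinGraph := ⟨4, cycleGraph 4⟩
def C5 : FinGraph := ⟨5, cycleGraph 5⟩
def twoK3 : FinGraph := ⟨6, twoTriangles⟩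

def exampleGraphs : Finset FinGraph := {K3, C4, C5, twoK3}

def hasTriangle (G : FinGraph) : Bool := decide (∃ v, inSubCopy G.adj K3 v)

theorem K3_inSubCopy (v : Fin 3) : inSubCopy K3.adj K3 v :=
  (inSubCopy_top_iff _ 3 v).2 ⟨univ, mem_univ v, by
    show (⊤ : SimpleGraph (Fin 3)).IsNClique 3 univ
    decide⟩

theorem twoK3_inSubCopy (v : Fin 6) : inSubCopy twoK3.adj K3 v :=
  (inSubCopy_top_iff _ 3 v).2 ⟨if v.val < 3 then {0, 1, 2} else {3, 4, 5}, by
    show v ∈ _ ∧ twoTriangles.IsNClique 3 _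
    revert v
    decide⟩

theorem not_inSubCopy_K3_of_cliqueFree {V : Type} {G : SimpleGraph V} (hG : G.CliqueFree 3)
    (v : V) : ¬ inSubCopy G K3 v := by
  rw [show K3 = ⟨3, ⊤⟩ from rfl, inSubCopy_top_iff]
  rintro ⟨s, -, hs⟩
  exact hG s hs

theorem hasTriangle_K3 : hasTriangle K3 = true :=
  decide_eq_true ⟨(0 : Fin 3), K3_inSubCopy 0⟩

theorem hasTriangle_twoK3 : hasTriangle twoK3 = true :=
  decide_eq_true ⟨(0 : Fin 6), twoK3_inSubCopy 0⟩

theorem hasTriangle_C4 : hasTriangle C4 = false :=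
  decide_eq_false fun ⟨v, hv⟩ => not_inSubCopy_K3_of_cliqueFree cycleGraph_four_cliqueFree v hv

section ExampleGraphs

theorem exampleGraphs_n_pos : ∀ G ∈ exampleGraphs, 0 < G.n := by
  simp [exampleGraphs, K3, C4, C5, twoK3]

theorem exampleGraphs_n_le : ∀ G ∈ exampleGraphs, G.n ≤ 6 := by
  simp [exampleGraphs, K3, C4, C5, twoK3]

theorem exampleGraphs_n_injective :
    ∀ G ∈ exampleGraphs, ∀ H ∈ exampleGraphs, G ≠ H → G.n ≠ H.n := by
  simp [exampleGraphs, K3, C4, C5, twoK3]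

theorem exampleGraphs_isRegularOfDegree : ∀ G ∈ exampleGraphs, G.adj.IsRegularOfDegree 2 := by
  simp only [exampleGraphs, mem_insert, mem_singleton, forall_eq_or_imp, forall_eq]
  exact ⟨(IsRegularOfDegree.top (V := Fin 3)).of_locallyFinite,
    (cycleGraph_isRegularOfDegree_two 1).of_locallyFinite,
    (cycleGraph_isRegularOfDegree_two 2).of_locallyFinite,
    twoTriangles_isRegularOfDegree.of_locallyFinite⟩

theorem exampleGraphs_inSubCopy_iff :
    ∀ G ∈ exampleGraphs, ∀ v, inSubCopy G.adj K3 v ↔ hasTriangle G := by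
  have of_forall {G : FinGraph} (h : ∀ v, inSubCopy G.adj K3 v) (v) :
      inSubCopy G.adj K3 v ↔ hasTriangle G := iff_of_true (h v) (decide_eq_true ⟨v, h v⟩)
  have of_cliqueFree {G : FinGraph} (h : G.adj.CliqueFree 3) (v) :
      inSubCopy G.adj K3 v ↔ hasTriangle G := by
    simp [hasTriangle, not_inSubCopy_K3_of_cliqueFree h]
  simp only [exampleGraphs, mem_insert, mem_singleton, forall_eq_or_imp, forall_eq]
  exact ⟨of_forall K3_inSubCopy, of_cliqueFree cycleGraph_four_cliqueFree,
    of_cliqueFree cycleGraph_five_cliqueFree, of_forall twoK3_inSubCopy⟩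

variable {G : FinGraph} {A : Type} {lab : Fin G.n → A} {a : A}

theorem exampleGraphs_ellF (hG : G ∈ exampleGraphs) (v : Fin G.n) :
    ellF G.adj {K3} v = if hasTriangle G then {K3} else ∅ := by
  simp only [ellF_singleton, exampleGraphs_inSubCopy_iff G hG]

theorem exampleGraphs_wlIP (hG : G ∈ exampleGraphs) (hlab : ∀ v, lab v = a)
    (w : (t : ℕ) → WLColor A t → ℝ) (T : ℕ) :
    wlIP w G.adj lab T = G.n * ∑ t ∈ range (T + 1), w t (regularColor a 2 t) := by
  rw [wlIP_of_isRegularOfDegree (exampleGraphs_isRegularOfDegree G hG) hlab, Fintype.card_fin]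

theorem exampleGraphs_wlNorm (hG : G ∈ exampleGraphs) (hlab : ∀ v, lab v = a) (T : ℕ) :
    wlNorm G.adj lab T = G.n * √(T + 1) := by
  rw [wlNorm_of_isRegularOfDegree (exampleGraphs_isRegularOfDegree G hG) hlab, Fintype.card_fin]

theorem exampleGraphs_normalized_wlIP (hG : G ∈ exampleGraphs) (hlab : ∀ v, lab v = a)
    (w : (t : ℕ) → WLColor A t → ℝ) (T : ℕ) :
    wlIP w G.adj lab T / wlNorm G.adj lab T =
      (∑ t ∈ range (T + 1), w t (regularColor a 2 t)) / √(T + 1) := by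
  have hn : (G.n : ℝ) ≠ 0 := Nat.cast_ne_zero.2 (exampleGraphs_n_pos G hG).ne'
  rw [exampleGraphs_wlIP hG hlab, exampleGraphs_wlNorm hG hlab, mul_div_mul_left _ _ hn]

end ExampleGraphs

theorem not_linSepBy_exampleGraphs_of_convex_combination {A : Type}
    {ip : ((t : ℕ) → WLColor A t → ℝ) → FinGraph → ℝ} {μ : ℝ} (hμ₀ : 0 ≤ μ) (hμ₁ : μ ≤ 1)
    (hip : ∀ w, ip w C4 = μ * ip w K3 + (1 - μ) * ip w twoK3) :
    ¬ LinSepBy exampleGraphs hasTriangle ip :=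
  not_linSepBy_of_convex_combination (by simp [exampleGraphs]) (by simp [exampleGraphs])
    (by simp [exampleGraphs]) hasTriangle_K3 hasTriangle_twoK3 hasTriangle_C4 hμ₀ hμ₁ hip

theorem not_linSepBy_wl_normalized (T : ℕ) : ¬ LinSepBy exampleGraphs hasTriangle
    (fun w G => wlIP w G.adj unlab T / wlNorm G.adj unlab T) := by
  refine not_linSepBy_exampleGraphs_of_convex_combination zero_le_one le_rfl fun w => ?_
  have h G (hG : G ∈ exampleGraphs := by simp [exampleGraphs]) :=
    exampleGraphs_normalized_wlIP hG (lab := unlab) (a := 0) (fun _ => rfl) w T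
  rw [h C4, h K3, h twoK3]
  ring

theorem not_linSepBy_wl (T : ℕ) : ¬ LinSepBy exampleGraphs hasTriangle
    (fun w G => wlIP w G.adj unlab T) := by
  refine not_linSepBy_exampleGraphs_of_convex_combination (μ := 2 / 3) (by norm_num)
    (by norm_num) fun w => ?_
  have h G (hG : G ∈ exampleGraphs := by simp [exampleGraphs]) :=
    exampleGraphs_wlIP hG (lab := unlab) (a := 0) (fun _ => rfl) w T
  rw [h C4, h K3, h twoK3]
  simp only [K3, C4, twoK3]
  ring

def triangleWeight : (t : ℕ) → WLColor (Set FinGraph) t → ℝ :=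
  roundZeroWeight fun L => if K3 ∈ L then 1 else -1

theorem sum_range_triangleWeight (L : Set FinGraph) (d T : ℕ) :
    ∑ t ∈ range (T + 1), triangleWeight t (regularColor L d t) = if K3 ∈ L then 1 else -1 :=
  sum_range_roundZeroWeight _ _ T

theorem linSepBy_wlF (T : ℕ) : LinSepBy exampleGraphs hasTriangle
    (fun w G => wlIP w G.adj (ellF G.adj {K3}) T) := by
  refine ⟨triangleWeight, 0, fun G hG => ?_⟩
  beta_reduce
  have hn : (0 : ℝ) < G.n := Nat.cast_pos.2 (exampleGraphs_n_pos G hG)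
  rw [add_zero, exampleGraphs_wlIP hG (exampleGraphs_ellF hG), sum_range_triangleWeight]
  cases hasTriangle G <;> simp [hn]

theorem linSepBy_wlF_normalized (T : ℕ) : LinSepBy exampleGraphs hasTriangle
    (fun w G => wlIP w G.adj (ellF G.adj {K3}) T / wlNorm G.adj (ellF G.adj {K3}) T) := by
  refine ⟨triangleWeight, 0, fun G hG => ?_⟩
  beta_reduce
  rw [add_zero, exampleGraphs_normalized_wlIP hG (exampleGraphs_ellF hG),
    sum_range_triangleWeight]
  have hT : (0 : ℝ) < √(T + 1) := by positivity
  cases hasTriangle G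
  · simpa using div_neg_of_neg_of_pos neg_one_lt_zero hT
  · simpa using one_div_pos.2 hT

/-- For every `n ≥ 10` there are a set `S` of pairwise non-isomorphic
graphs of order at most `n`, a concept `cl : S → {0,1}` and a graph `F` such that the graphs
in `S` are pairwise distinguished by `1`-WL after one round, are not linearly separable with
respect to `cl` under the (normalized or unnormalized) `1`-WL feature vectors for any
`T ≥ 0`, and are linearly separable with respect to `cl` under the (normalized or
unnormalized) `1`-WL_𝓕 feature vectors with `𝓕 := {F}` for all `T ≥ 0`. -/
theorem wl_distinguishes_but_not_separates (n : ℕ) (hn : 10 ≤ n) :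
    ∃ (S : Finset FinGraph) (cl : FinGraph → Bool) (F : FinGraph),
      (∀ G ∈ S, G.n ≤ n) ∧
      (∀ G ∈ S, ∀ H ∈ S, G ≠ H → IsEmpty (G.adj ≃g H.adj)) ∧
      -- (1) pairwise distinguishable by 1-WL after one round
      (∀ G ∈ S, ∀ H ∈ S, G ≠ H →
        Finset.univ.val.map (wlColoring G.adj unlab 1) ≠
          Finset.univ.val.map (wlColoring H.adj unlab 1)) ∧
      -- (2) not linearly separable under the normalized 1-WL feature vectors
      (∀ T : ℕ, ¬ LinSepBy S cl
        (fun w G => wlIP w G.adj unlab T / wlNorm G.adj unlab T)) ∧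
      -- (3) linearly separable under the normalized 1-WL_𝓕 feature vectors
      (∀ T : ℕ, LinSepBy S cl
        (fun w G => wlIP w G.adj (ellF G.adj {F}) T / wlNorm G.adj (ellF G.adj {F}) T)) ∧
      -- the same for the unnormalized feature vectors
      (∀ T : ℕ, ¬ LinSepBy S cl (fun w G => wlIP w G.adj unlab T)) ∧
      (∀ T : ℕ, LinSepBy S cl (fun w G => wlIP w G.adj (ellF G.adj {F}) T)) := by
  refine ⟨exampleGraphs, hasTriangle, K3, fun G hG => (exampleGraphs_n_le G hG).trans (by omega),
    fun G hG H hH hGH => ?_, fun G hG H hH hGH => ?_, not_linSepBy_wl_normalized,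
    linSepBy_wlF_normalized, not_linSepBy_wl, linSepBy_wlF⟩
  · exact ⟨fun e => exampleGraphs_n_injective G hG H hH hGH (Fin.equiv_iff_eq.1 ⟨e.toEquiv⟩)⟩
  · intro h
    simpa using exampleGraphs_n_injective G hG H hH hGH (by simpa using congrArg Multiset.card h)

end
end

section
/- Let 𝓕 be a finite set of graphs and T ≥ 0. For any two n-order graphs G and H: ‖φ^{(T)}_{WLOA,𝓕}(G) − φ^{(T)}_{WLOA,𝓕}(H)‖ ≥ ‖φ^{(T)}_WLOA(G) − φ^{(T)}_WLOA(H)‖; i.e., pairwise distances in the 1-WLOA_𝓕 feature space never decrease compared to the 1-WLOA feature space. -/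
open scoped Classical

noncomputable section

/-- The `(t, c, j)`-entry of the 1-WLOA feature vector of `G`: it equals `1` iff at least `j`
vertices of `G` have color `c` at round `t` (a unary encoding of the color counts). -/
def wloaEntry {V A : Type} [Fintype V] (G : SimpleGraph V) (lab : V → A) (t : ℕ)
    (c : WLColor A t) (j : ℕ) : ℝ :=
  if j ≤ wlCount G lab t c then 1 else 0

/-- The squared Euclidean distance `‖φ^{(T)}_WLOA(G) − φ^{(T)}_WLOA(H)‖²` between the 1-WLOA
feature vectors of two `n`-order graphs; the sum over colors may range over the colors
occurring in either graph since all other coordinates vanish. -/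
def wloaDistSq (n : ℕ) {V W A : Type} [Fintype V] [Fintype W] (G : SimpleGraph V)
    (labG : V → A) (H : SimpleGraph W) (labH : W → A) (T : ℕ) : ℝ :=
  ∑ t ∈ Finset.range (T + 1), ∑ c ∈ wlColors G labG t ∪ wlColors H labH t,
    ∑ j ∈ Finset.Icc 1 n, (wloaEntry G labG t c j - wloaEntry H labH t c j) ^ 2

/-!
Forgetting the initial labels is a map `A → B` of label sets, and by induction on the round
the 1-WL colors computed from the forgotten labels are an image of those computed from the
full labels. Hence every color count of the unlabeled run is a sum of color counts of the
labeled run, and by the triangle inequality the `ℓ¹`-distance of the count vectors can only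
shrink under this merging. The unary encoding turns this `ℓ¹`-distance into the squared
Euclidean distance of the WLOA feature vectors.
-/

open Finset

theorem Finset.sum_abs_sum_fiberwise_le {ι κ G : Type*} [DecidableEq κ] [AddCommGroup G]
    [LinearOrder G] [IsOrderedAddMonoid G] (s : Finset ι) (g : ι → κ) (u : ι → G) :
    ∑ k ∈ s.image g, |∑ i ∈ s with g i = k, u i| ≤ ∑ i ∈ s, |u i| :=
  calc ∑ k ∈ s.image g, |∑ i ∈ s with g i = k, u i|
      ≤ ∑ k ∈ s.image g, ∑ i ∈ s with g i = k, |u i| :=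
        sum_le_sum fun _ _ => abs_sum_le_sum_abs _ _
    _ = ∑ i ∈ s, |u i| := sum_fiberwise_of_maps_to (fun _ hi => mem_image_of_mem g hi) _

theorem sum_Icc_sq_sub_ite_eq_abs_sub {n a b : ℕ} (ha : a ≤ n) (hb : b ≤ n) :
    ∑ j ∈ Icc 1 n, ((if j ≤ a then (1 : ℝ) else 0) - if j ≤ b then 1 else 0) ^ 2
      = |(a : ℝ) - b| := by
  wlog hab : a ≤ b generalizing a b
  · rw [abs_sub_comm, ← this hb ha (le_of_not_ge hab)]
    exact sum_congr rfl fun _ _ => by ring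
  have indicator : ∀ j ∈ Icc 1 n,
      ((if j ≤ a then (1 : ℝ) else 0) - if j ≤ b then 1 else 0) ^ 2
        = if j ∈ Ioc a b then 1 else 0 := by
    intro j _
    simp only [mem_Ioc]
    split_ifs <;> norm_num <;> omega
  have hsub : Ioc a b ⊆ Icc 1 n := fun j hj => by
    simp only [mem_Ioc, mem_Icc] at hj ⊢
    omega
  rw [sum_congr rfl indicator, sum_ite_mem, inter_eq_right.mpr hsub, sum_const, Nat.card_Ioc,
    nsmul_one, Nat.cast_sub hab, abs_sub_comm,
    abs_of_nonneg (sub_nonneg.mpr (by exact_mod_cast hab))]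

section

variable {V W A B : Type} [Fintype V] [Fintype W]

def WLColor.map (f : A → B) : (t : ℕ) → WLColor A t → WLColor B t :=
  fun t => Nat.rec (motive := fun t => WLColor A t → WLColor B t) f
    (fun _ ih c => (ih c.1, c.2.map ih)) t

theorem wlColoring_comp (G : SimpleGraph V) (lab : V → A) (f : A → B) (t : ℕ) (v : V) :
    wlColoring G (f ∘ lab) t v = WLColor.map f t (wlColoring G lab t v) := by
  induction t generalizing v with
  | zero => rfl
  | succ t ih =>
    refine Prod.ext (ih v) ?_
    show Multiset.map (wlColoring G (f ∘ lab) t) _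
      = Multiset.map (WLColor.map f t) (Multiset.map (wlColoring G lab t) _)
    rw [Multiset.map_map]
    exact Multiset.map_congr rfl fun u _ => ih u

theorem wlColors_comp (G : SimpleGraph V) (lab : V → A) (f : A → B) (t : ℕ) :
    wlColors G (f ∘ lab) t = (wlColors G lab t).image (WLColor.map f t) := by
  simp only [wlColors, image_image]
  exact image_congr fun v _ => wlColoring_comp G lab f t v

theorem wlCount_comp (G : SimpleGraph V) (lab : V → A) (f : A → B) (t : ℕ)
    {s : Finset (WLColor A t)} (hs : wlColors G lab t ⊆ s) (c : WLColor B t) :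
    wlCount G (f ∘ lab) t c = ∑ c' ∈ s with WLColor.map f t c' = c, wlCount G lab t c' := by
  rw [wlCount, card_eq_sum_card_fiberwise (f := wlColoring G lab t) fun v hv => ?_]
  · refine sum_congr rfl fun c' hc' => ?_
    rw [wlCount, filter_filter]
    refine congrArg card (filter_congr fun v _ => ⟨And.right, fun h => ⟨?_, h⟩⟩)
    rw [wlColoring_comp, h, (mem_filter.mp hc').2]
  · simp only [coe_filter, Set.mem_ofPred_eq, mem_univ, true_and] at hv ⊢
    exact ⟨hs (mem_image_of_mem _ (mem_univ v)), hv ▸ (wlColoring_comp G lab f t v).symm⟩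

theorem wlCount_le_card (G : SimpleGraph V) (lab : V → A) (t : ℕ) (c : WLColor A t) :
    wlCount G lab t c ≤ Fintype.card V :=
  card_filter_le _ _

theorem wloaDistSq_eq_sum_abs {n : ℕ} (G : SimpleGraph V) (labG : V → A) (H : SimpleGraph W)
    (labH : W → A) (T : ℕ) (hV : Fintype.card V ≤ n) (hW : Fintype.card W ≤ n) :
    wloaDistSq n G labG H labH T = ∑ t ∈ range (T + 1),
      ∑ c ∈ wlColors G labG t ∪ wlColors H labH t,
        |(wlCount G labG t c : ℝ) - wlCount H labH t c| := by
  refine sum_congr rfl fun t _ => sum_congr rfl fun c _ => ?_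
  exact sum_Icc_sq_sub_ite_eq_abs_sub ((wlCount_le_card G labG t c).trans hV)
    ((wlCount_le_card H labH t c).trans hW)

theorem wloaDistSq_comp_le {n : ℕ} (f : A → B) (G : SimpleGraph V) (labG : V → A)
    (H : SimpleGraph W) (labH : W → A) (T : ℕ) (hV : Fintype.card V ≤ n)
    (hW : Fintype.card W ≤ n) :
    wloaDistSq n G (f ∘ labG) H (f ∘ labH) T ≤ wloaDistSq n G labG H labH T := by
  rw [wloaDistSq_eq_sum_abs _ _ _ _ _ hV hW, wloaDistSq_eq_sum_abs _ _ _ _ _ hV hW]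
  refine sum_le_sum fun t _ => ?_
  set s := wlColors G labG t ∪ wlColors H labH t
  have hcolors : wlColors G (f ∘ labG) t ∪ wlColors H (f ∘ labH) t
      = s.image (WLColor.map f t) := by
    rw [wlColors_comp, wlColors_comp, image_union]
  have hcounts : ∀ c, (wlCount G (f ∘ labG) t c : ℝ) - wlCount H (f ∘ labH) t c
      = ∑ c' ∈ s with WLColor.map f t c' = c,
          ((wlCount G labG t c' : ℝ) - wlCount H labH t c') := by
    intro c
    rw [wlCount_comp G labG f t subset_union_left, wlCount_comp H labH f t subset_union_right,
      Nat.cast_sum, Nat.cast_sum, sum_sub_distrib]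
  simp only [hcolors, hcounts]
  exact sum_abs_sum_fiberwise_le s _ _

end

/-- For any two `n`-order graphs `G` and `H`, any finite set `𝓕` of graphs
and any `T ≥ 0`, the distance between the 1-WLOA_𝓕 feature vectors of `G` and `H` is at
least the distance between their 1-WLOA feature vectors. -/
theorem wloaF_distance_mono (n : ℕ) (G H : SimpleGraph (Fin n)) (FF : Finset FinGraph)
    (T : ℕ) :
    Real.sqrt (wloaDistSq n G unlab H unlab T) ≤
      Real.sqrt (wloaDistSq n G (ellF G FF) H (ellF H FF) T) :=
  Real.sqrt_le_sqrt <| wloaDistSq_comp_le (fun _ => (0 : ℕ)) G (ellF G FF) H (ellF H FF) T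
    (Fintype.card_fin n).le (Fintype.card_fin n).le

end
end

section
/- Let (x₁, y₁), …, (x_n, y_n) and (x̃₁, y₁), …, (x̃_n, y_n) be two linearly separable samples in ℝ^d with the same labels y_i ∈ {0,1} and margins λ and λ̃, respectively. If min over pairs i,j with y_i ≠ y_j of (‖x̃_i − x̃_j‖² − ‖x_i − x_j‖²) is strictly larger than max over pairs with y_i = y_j of (‖x̃_i − x̃_j‖² − ‖x_i − x_j‖²) — i.e., the minimum increase in squared distances between classes strictly exceeds the maximum increase in squared distances within each class — then λ̃ > λ. -/
/-! Let `a'`, `b'` be a closest pair of points of the two new hulls and write them as convex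
combinations `∑ wᵢ • x̃ᵢ`, `∑ vⱼ • x̃ⱼ` of the two classes. For any family `z`,
`‖∑ wᵢ • zᵢ - ∑ vⱼ • zⱼ‖²` is the `w ⊗ v`-average of the squared distances between the classes
minus half the `w ⊗ w`- and `v ⊗ v`-averages of those within the classes. Taking the difference of
this identity for `z = x̃` and `z = x`, and letting `c` be the least increase between the classes,
the squared distance grows by more than `c - c / 2 - c / 2 = 0`. So the points `∑ wᵢ • xᵢ`,
`∑ vⱼ • xⱼ` of the old hulls are strictly closer than `a'`, `b'`, whence `2λ < 2λ̃`. -/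

open Finset

section ConvexCombination

variable {R E ι κ : Type*} [Field R] [LinearOrder R] [IsStrictOrderedRing R]
  [AddCommGroup E] [Module R E]

theorem Finset.mem_convexHull_image_iff {s : Finset ι} {f : ι → E} {p : E} :
    p ∈ convexHull R (f '' s) ↔
      ∃ w : ι → R, (∀ i ∈ s, 0 ≤ w i) ∧ ∑ i ∈ s, w i = 1 ∧ ∑ i ∈ s, w i • f i = p := by
  classical
  constructor
  · have hconv : Convex R {p | ∃ w : ι → R, (∀ i ∈ s, 0 ≤ w i) ∧ ∑ i ∈ s, w i = 1 ∧
        ∑ i ∈ s, w i • f i = p} := by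
      rintro _ ⟨w, hw₀, hw₁, rfl⟩ _ ⟨v, hv₀, hv₁, rfl⟩ a b ha hb hab
      refine ⟨a • w + b • v, fun i hi => ?_, ?_, ?_⟩
      · simp only [Pi.add_apply, Pi.smul_apply, smul_eq_mul]
        exact add_nonneg (mul_nonneg ha (hw₀ i hi)) (mul_nonneg hb (hv₀ i hi))
      · simp only [Pi.add_apply, Pi.smul_apply, smul_eq_mul, sum_add_distrib, ← mul_sum, hw₁, hv₁,
          mul_one, hab]
      · simp only [Pi.add_apply, Pi.smul_apply, smul_eq_mul, add_smul, mul_smul, sum_add_distrib,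
          smul_sum]
    refine fun hp => convexHull_min ?_ hconv hp
    rintro _ ⟨i, hi : i ∈ s, rfl⟩
    refine ⟨Pi.single i 1, fun j _ => ?_, by simp [hi], by simp [Pi.single_apply, hi]⟩
    by_cases h : j = i <;> simp [h]
  · rintro ⟨w, hw₀, hw₁, rfl⟩
    exact (convex_convexHull R _).sum_mem hw₀ hw₁ fun i hi => subset_convexHull R _ ⟨i, hi, rfl⟩

theorem Convex.sum_sum_mul_smul_mem {s : Set E} (hs : Convex R s) {P : Finset ι} {N : Finset κ}
    {w : ι → R} {v : κ → R} {f : ι → κ → E} (hw₀ : ∀ i ∈ P, 0 ≤ w i) (hw₁ : ∑ i ∈ P, w i = 1)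
    (hv₀ : ∀ j ∈ N, 0 ≤ v j) (hv₁ : ∑ j ∈ N, v j = 1) (hf : ∀ i ∈ P, ∀ j ∈ N, f i j ∈ s) :
    ∑ i ∈ P, ∑ j ∈ N, (w i * v j) • f i j ∈ s := by
  simp only [mul_smul, ← smul_sum]
  exact hs.sum_mem hw₀ hw₁ fun i hi => hs.sum_mem hv₀ hv₁ (hf i hi)

end ConvexCombination

theorem IsCompact.exists_dist_eq_sInf_image2 {α : Type*} [PseudoMetricSpace α] {A B : Set α}
    (hA : IsCompact A) (hB : IsCompact B) (hA' : A.Nonempty) (hB' : B.Nonempty) :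
    ∃ a ∈ A, ∃ b ∈ B, dist a b = sInf (Set.image2 dist A B) := by
  have hAB : IsCompact (Set.image2 dist A B) := by
    rw [← Set.image_uncurry_prod]
    exact (hA.prod hB).image continuous_dist
  exact hAB.sInf_mem (hA'.image2 hB')

theorem sInf_image2_dist_le {α : Type*} [PseudoMetricSpace α] {A B : Set α} {a b : α}
    (ha : a ∈ A) (hb : b ∈ B) : sInf (Set.image2 dist A B) ≤ dist a b :=
  csInf_le ⟨0, Set.forall_mem_image2.2 fun _ _ _ _ => dist_nonneg⟩ (Set.mem_image2_of_mem ha hb)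

section InnerProductSpace

variable {E ι : Type*} [NormedAddCommGroup E] [InnerProductSpace ℝ E]

theorem sum_sum_mul_norm_sub_sq {s t : Finset ι} {a b : ι → ℝ} (ha : ∑ i ∈ s, a i = 1)
    (hb : ∑ j ∈ t, b j = 1) (z : ι → E) :
    ∑ i ∈ s, ∑ j ∈ t, a i * b j * ‖z i - z j‖ ^ 2 =
      ∑ i ∈ s, a i * ‖z i‖ ^ 2 + ∑ j ∈ t, b j * ‖z j‖ ^ 2
        - 2 * inner ℝ (∑ i ∈ s, a i • z i) (∑ j ∈ t, b j • z j) := by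
  have hs : ∑ i ∈ s, a i * ‖z i‖ ^ 2 = ∑ i ∈ s, ∑ j ∈ t, a i * b j * ‖z i‖ ^ 2 := by
    simp only [← sum_mul, ← mul_sum, hb, mul_one]
  have ht : ∑ j ∈ t, b j * ‖z j‖ ^ 2 = ∑ i ∈ s, ∑ j ∈ t, a i * b j * ‖z j‖ ^ 2 := by
    simp only [mul_assoc, ← mul_sum, ← sum_mul, ha, one_mul]
  rw [hs, ht, sum_inner, mul_sum, ← sum_add_distrib, ← sum_sub_distrib]
  refine sum_congr rfl fun i _ => ?_
  rw [inner_sum, mul_sum, ← sum_add_distrib, ← sum_sub_distrib]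
  refine sum_congr rfl fun j _ => ?_
  rw [norm_sub_sq_real, real_inner_smul_left, real_inner_smul_right]
  ring

theorem norm_sum_smul_sub_sum_smul_sq {s t : Finset ι} {a b : ι → ℝ} (ha : ∑ i ∈ s, a i = 1)
    (hb : ∑ j ∈ t, b j = 1) (z : ι → E) :
    ‖∑ i ∈ s, a i • z i - ∑ j ∈ t, b j • z j‖ ^ 2 =
      ∑ i ∈ s, ∑ j ∈ t, a i * b j * ‖z i - z j‖ ^ 2
        - (∑ i ∈ s, ∑ j ∈ s, a i * a j * ‖z i - z j‖ ^ 2) / 2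
        - (∑ i ∈ t, ∑ j ∈ t, b i * b j * ‖z i - z j‖ ^ 2) / 2 := by
  rw [sum_sum_mul_norm_sub_sq ha hb, sum_sum_mul_norm_sub_sq ha ha, sum_sum_mul_norm_sub_sq hb hb,
    norm_sub_sq_real, real_inner_self_eq_norm_sq, real_inner_self_eq_norm_sq]
  ring

theorem dist_sum_smul_lt_of_sq_dist_increase {P N : Finset ι} {w v : ι → ℝ}
    (hw₀ : ∀ i ∈ P, 0 ≤ w i) (hw₁ : ∑ i ∈ P, w i = 1)
    (hv₀ : ∀ j ∈ N, 0 ≤ v j) (hv₁ : ∑ j ∈ N, v j = 1) (x x' : ι → E) (c : ℝ)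
    (hPN : ∀ i ∈ P, ∀ j ∈ N, c ≤ dist (x' i) (x' j) ^ 2 - dist (x i) (x j) ^ 2)
    (hPP : ∀ i ∈ P, ∀ j ∈ P, dist (x' i) (x' j) ^ 2 - dist (x i) (x j) ^ 2 < c)
    (hNN : ∀ i ∈ N, ∀ j ∈ N, dist (x' i) (x' j) ^ 2 - dist (x i) (x j) ^ 2 < c) :
    dist (∑ i ∈ P, w i • x i) (∑ j ∈ N, v j • x j) <
      dist (∑ i ∈ P, w i • x' i) (∑ j ∈ N, v j • x' j) := by
  set δ : ι → ι → ℝ := fun i j => dist (x' i) (x' j) ^ 2 - dist (x i) (x j) ^ 2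
  have hδPN : c ≤ ∑ i ∈ P, ∑ j ∈ N, (w i * v j) • δ i j :=
    (convex_Ici c).sum_sum_mul_smul_mem hw₀ hw₁ hv₀ hv₁ hPN
  have hδPP : ∑ i ∈ P, ∑ j ∈ P, (w i * w j) • δ i j < c :=
    (convex_Iio c).sum_sum_mul_smul_mem hw₀ hw₁ hw₀ hw₁ hPP
  have hδNN : ∑ i ∈ N, ∑ j ∈ N, (v i * v j) • δ i j < c :=
    (convex_Iio c).sum_sum_mul_smul_mem hv₀ hv₁ hv₀ hv₁ hNN
  have hsq : dist (∑ i ∈ P, w i • x' i) (∑ j ∈ N, v j • x' j) ^ 2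
      - dist (∑ i ∈ P, w i • x i) (∑ j ∈ N, v j • x j) ^ 2
      = ∑ i ∈ P, ∑ j ∈ N, (w i * v j) • δ i j - (∑ i ∈ P, ∑ j ∈ P, (w i * w j) • δ i j) / 2
        - (∑ i ∈ N, ∑ j ∈ N, (v i * v j) • δ i j) / 2 := by
    simp only [δ, dist_eq_norm, norm_sum_smul_sub_sum_smul_sq hw₁ hv₁, smul_eq_mul, mul_sub,
      sum_sub_distrib]
    ring
  exact lt_of_pow_lt_pow_left₀ 2 dist_nonneg (by linarith)

end InnerProductSpace

theorem margin_increase_general (d n : ℕ) (x xt : Fin n → EuclideanSpace ℝ (Fin d))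
    (y : Fin n → Bool) (lam lamt : ℝ)
    (h1 : ∃ i, y i = true) (h0 : ∃ i, y i = false)
    (hlam : lam = (1 / 2) * sInf (Set.image2 dist
        (convexHull ℝ (x '' {i | y i = true})) (convexHull ℝ (x '' {i | y i = false}))))
    (hlamt : lamt = (1 / 2) * sInf (Set.image2 dist
        (convexHull ℝ (xt '' {i | y i = true})) (convexHull ℝ (xt '' {i | y i = false}))))
    (hcond : ∀ i j k l : Fin n, y i ≠ y j → y k = y l →
      dist (xt k) (xt l) ^ 2 - dist (x k) (x l) ^ 2 <
        dist (xt i) (xt j) ^ 2 - dist (x i) (x j) ^ 2) :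
    lam < lamt := by
  set P := univ.filter fun i => y i = true
  set N := univ.filter fun i => y i = false
  rw [← coe_filter_univ, ← coe_filter_univ] at hlam hlamt
  obtain ⟨i₁, hi₁⟩ := h1
  obtain ⟨j₁, hj₁⟩ := h0
  have hP : i₁ ∈ P := (mem_filter_univ _).2 hi₁
  have hN : j₁ ∈ N := (mem_filter_univ _).2 hj₁
  obtain ⟨_, hat, _, hbt, hnew⟩ := IsCompact.exists_dist_eq_sInf_image2
    ((P.finite_toSet.image xt).isCompact_convexHull ℝ)
    ((N.finite_toSet.image xt).isCompact_convexHull ℝ)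
    ((Set.Nonempty.image xt ⟨i₁, hP⟩).convexHull) ((Set.Nonempty.image xt ⟨j₁, hN⟩).convexHull)
  obtain ⟨w, hw₀, hw₁, rfl⟩ := mem_convexHull_image_iff.1 hat
  obtain ⟨v, hv₀, hv₁, rfl⟩ := mem_convexHull_image_iff.1 hbt
  have hold := sInf_image2_dist_le
    (mem_convexHull_image_iff.2 ⟨w, hw₀, hw₁, rfl⟩ : _ ∈ convexHull ℝ (x '' P))
    (mem_convexHull_image_iff.2 ⟨v, hv₀, hv₁, rfl⟩ : _ ∈ convexHull ℝ (x '' N))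
  obtain ⟨⟨i₀, j₀⟩, hij₀, hmin⟩ := (P ×ˢ N).exists_min_image
    (fun p => dist (xt p.1) (xt p.2) ^ 2 - dist (x p.1) (x p.2) ^ 2)
    ⟨(i₁, j₁), mk_mem_product hP hN⟩
  simp only [mem_product, P, N, mem_filter_univ] at hij₀
  have hlt : dist (∑ i ∈ P, w i • x i) (∑ j ∈ N, v j • x j) <
      dist (∑ i ∈ P, w i • xt i) (∑ j ∈ N, v j • xt j) := by
    refine dist_sum_smul_lt_of_sq_dist_increase hw₀ hw₁ hv₀ hv₁ x xt _
      (fun i hi j hj => hmin (i, j) (mk_mem_product hi hj)) ?_ ?_ <;>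
    · intro i hi j hj
      simp only [P, N, mem_filter_univ] at hi hj
      exact hcond i₀ j₀ i j (by simp [hij₀]) (by rw [hi, hj])
  linarith

/-- Given two linearly separable samples on the same labels with margins
`λ` and `λ̃` (half the distance between the convex hulls of the two classes), if the minimum
increase of squared distances between the classes strictly exceeds the maximum increase of
squared distances within the classes, then `λ̃ > λ`. -/
theorem margin_increase (d n : ℕ) (x xt : Fin n → EuclideanSpace ℝ (Fin d))
    (y : Fin n → Bool) (lam lamt : ℝ)
    (h1 : ∃ i, y i = true) (h0 : ∃ i, y i = false)
    (hlam : lam = (1 / 2) * sInf (Set.image2 dist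
        (convexHull ℝ (x '' {i | y i = true})) (convexHull ℝ (x '' {i | y i = false}))))
    (hlamt : lamt = (1 / 2) * sInf (Set.image2 dist
        (convexHull ℝ (xt '' {i | y i = true})) (convexHull ℝ (xt '' {i | y i = false}))))
    (hsep : 0 < lam) (hsept : 0 < lamt)
    (hcond : ∀ i j k l : Fin n, y i ≠ y j → y k = y l →
      dist (xt k) (xt l) ^ 2 - dist (x k) (x l) ^ 2 <
        dist (xt i) (xt j) ^ 2 - dist (x i) (x j) ^ 2) :
    lam < lamt :=
  margin_increase_general d n x xt y lam lamt h1 h0 hlam hlamt hcond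
end
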